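/- Let J ⊆ R be a binomial ideal, let a ∈ ℤ^{s+r} be a tuple of weights, and let t ∈ K with t ≠ 0. For ξ ∈ W let t·ξ denote the point with coordinates (t·ξ)_i = t^{a_i}·ξ_i (torus action with weights a). Then t·ξ ∈ W and Eord_ξ(J) = Eord_{t·ξ}(J); that is, the E-order function of a binomial ideal is equivariant for the torus action. -/

import Mathlib

open MvPolynomial

noncomputable section

/-- The variable index type: `x`-variables indexed by `Fin s`, `y`-variables by `Fin r`. -/
abbrev BV (s r : ℕ) : Type := Fin s ⊕ Fin r

/-- The polynomial ring `R = K[x_1,…,x_s,y_1,…,y_r]`. -/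
abbrev BR (K : Type) [Field K] (s r : ℕ) : Type := MvPolynomial (BV s r) K

variable (K : Type) [Field K] (s r : ℕ)

/-- `W`: the set of points all of whose `y`-coordinates are nonzero. -/
def Wset : Set (BV s r → K) := {ξ | ∀ j : Fin r, ξ (Sum.inr j) ≠ 0}

/-- `I_ξ`: the ideal generated by the variables vanishing at `ξ`. -/
def Ivan (ξ : BV s r → K) : Ideal (BR K s r) :=
  Ideal.span {p : BR K s r | ∃ i : BV s r, ξ i = 0 ∧ p = X i}

/-- `m_ξ`: the maximal ideal of polynomials vanishing at `ξ`. -/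
def mAt (ξ : BV s r → K) : Ideal (BR K s r) := RingHom.ker (eval ξ)

instance mAt_isMaximal (ξ : BV s r → K) : (mAt K s r ξ).IsMaximal :=
  RingHom.ker_isMaximal_of_surjective _ (fun a => ⟨C a, eval_C a⟩)

/-- `O_ξ`: the localization of `R` at `m_ξ`. -/
abbrev Oloc (ξ : BV s r → K) : Type := Localization.AtPrime (mAt K s r ξ)

/-- The `E`-order of an ideal `J` at a point `ξ`:
`sup { m : J·O_ξ ⊆ (I_ξ·O_ξ)^m }`. -/
def Eord (ξ : BV s r → K) (J : Ideal (BR K s r)) : ℕ∞ :=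
  sSup ((fun m : ℕ => (m : ℕ∞)) ''
    {m : ℕ | J.map (algebraMap (BR K s r) (Oloc K s r ξ)) ≤
      ((Ivan K s r ξ).map (algebraMap (BR K s r) (Oloc K s r ξ))) ^ m})

/-- The order of an ideal `J` at a point `ξ`:
`sup { m : J·O_ξ ⊆ (m_ξ·O_ξ)^m }`. -/
def ordAt (ξ : BV s r → K) (J : Ideal (BR K s r)) : ℕ∞ :=
  sSup ((fun m : ℕ => (m : ℕ∞)) ''
    {m : ℕ | J.map (algebraMap (BR K s r) (Oloc K s r ξ)) ≤
      ((mAt K s r ξ).map (algebraMap (BR K s r) (Oloc K s r ξ))) ^ m})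

/-- `x^α`. -/
def xPow (α : Fin s → ℕ) : BR K s r := ∏ i, X (Sum.inl i) ^ α i

/-- `y^γ` for `γ ∈ ℕ^r`. -/
def yPow (γ : Fin r → ℕ) : BR K s r := ∏ j, X (Sum.inr j) ^ γ j

/-- positive part `γ₊` of `γ ∈ ℤ^r`. -/
def ipos (γ : Fin r → ℤ) : Fin r → ℕ := fun j => (γ j).toNat

/-- negative part `γ₋` of `γ ∈ ℤ^r`. -/
def ineg (γ : Fin r → ℤ) : Fin r → ℕ := fun j => (-(γ j)).toNat

/-- a non-hyperbolic binomial `y^{γ₊}x^α − b·y^{γ₋}x^β`. -/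
def nhb (γ : Fin r → ℤ) (α β : Fin s → ℕ) (b : K) : BR K s r :=
  yPow K s r (ipos r γ) * xPow K s r α - C b * yPow K s r (ineg r γ) * xPow K s r β

/-- a hyperbolic equation `y^{δ₋} − μ·y^{δ₊}`. -/
def hyp (δ : Fin r → ℤ) (μ : K) : BR K s r :=
  yPow K s r (ineg r δ) - C μ * yPow K s r (ipos r δ)

/-- a generator of a binomial ideal:
`x^λ(y^{δ₋} − μ y^{δ₊})` or `x^ν(y^{γ₊}x^α − b y^{γ₋}x^β)` with `α,β` of disjoint supports. -/
def IsBinomGen (g : BR K s r) : Prop :=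
  (∃ (lam : Fin s → ℕ) (δ : Fin r → ℤ) (μ : K),
      g = xPow K s r lam * hyp K s r δ μ) ∨
  (∃ (ν α β : Fin s → ℕ) (γ : Fin r → ℤ) (b : K),
      (∀ i, α i = 0 ∨ β i = 0) ∧ g = xPow K s r ν * nhb K s r γ α β b)

/-- a binomial ideal: an ideal generated by finitely many binomial generators. -/
def IsBinomialIdeal (J : Ideal (BR K s r)) : Prop :=
  ∃ S : Finset (BR K s r), (∀ g ∈ S, IsBinomGen K s r g) ∧ J = Ideal.span (S : Set (BR K s r))

open Classical in
/-- `|ν|_ξ = Σ_{i : ξ_i = 0} ν_i` (sum over vanishing x-coordinates). -/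
def nsumAt (ξ : BV s r → K) (ν : Fin s → ℕ) : ℕ :=
  ∑ i, if ξ (Sum.inl i) = 0 then ν i else 0


/-- `Option A ⊕ B ≃ Option (A ⊕ B)`. -/
def optSum (A B : Type) : Option A ⊕ B ≃ Option (A ⊕ B) :=
  ((Equiv.optionEquivSumPUnit A).sumCongr (Equiv.refl B)).trans <|
    (Equiv.sumAssoc A PUnit.{1} B).trans <|
      ((Equiv.refl A).sumCongr (Equiv.sumComm PUnit.{1} B)).trans <|
        (Equiv.sumAssoc A B PUnit.{1}).symm.trans
          (Equiv.optionEquivSumPUnit (A ⊕ B)).symm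

/-- The variables of `K[x_1,…,x_{s+1},y]` split as the variable `x_1` (the `none` case)
and the variables of `K[x_2,…,x_{s+1},y]`. -/
def varEquiv : BV (s + 1) r ≃ Option (BV s r) :=
  ((finSuccEquiv s).sumCongr (Equiv.refl (Fin r))).trans (optSum (Fin s) (Fin r))

/-- Identification of `R = K[x_1,…,x_{s+1},y]` with `R'[x_1]`, `R' = K[x_2,…,x_{s+1},y]`. -/
def toPoly : BR K (s + 1) r ≃ₐ[K] Polynomial (BR K s r) :=
  (renameEquiv K (varEquiv s r)).trans (optionEquivLeft K (BV s r))

/-- `a_{f,k}`: the coefficient of `x_1^k` in `f` under the identification `R = R'[x_1]`. -/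
def coeffAt (f : BR K (s + 1) r) (k : ℕ) : BR K s r :=
  (toPoly K s r f).coeff k

/-- The coefficient ideal `C(P,c)` of `P` along `E` with respect to `V = {x_1 = 0}`,
with factorial normalization: it is generated by the `a_{f,k}^{c!/(c-k)}`, `f ∈ P`, `k < c`. -/
def coeffIdeal (P : Ideal (BR K (s + 1) r)) (c : ℕ) : Ideal (BR K s r) :=
  Ideal.span {g : BR K s r |
    ∃ f ∈ P, ∃ k < c, g = coeffAt K s r f k ^ (Nat.factorial c / (c - k))}

/-- `ξ'`: the point `ξ` with its first (`x_1`) coordinate removed. -/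
def resPt (ξ : BV (s + 1) r → K) : BV s r → K :=
  fun v => match v with
  | Sum.inl i => ξ (Sum.inl i.succ)
  | Sum.inr j => ξ (Sum.inr j)

open Classical in
/-- The chart morphism `σ_j` of the blow-up along `Z = ∩_{i ∈ I} {x_i = 0}`:
`x_i ↦ x_i·x_j` for `i ∈ I ∖ {j}`, all other variables are fixed. -/
def chart (I : Finset (Fin s)) (j : Fin s) : BR K s r →ₐ[K] BR K s r :=
  aeval (fun v : BV s r => match v with
    | Sum.inl i => if i ∈ I ∧ i ≠ j then X (Sum.inl i) * X (Sum.inl j) else X (Sum.inl i)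
    | Sum.inr k => X (Sum.inr k))

end

noncomputable section
namespace EAux

variable {K : Type} [Field K] {s r : ℕ}

open Classical in
def w (ξ : BV s r → K) (σ : BV s r →₀ ℕ) : ℕ :=
  ∑ i ∈ σ.support, if ξ i = 0 then σ i else 0

open Classical in
def psi (ξ : BV s r → K) : BR K s r →ₐ[K] Polynomial (BR K s r) :=
  aeval (fun i => if ξ i = 0 then Polynomial.X * Polynomial.C (X i) else Polynomial.C (X i))

open Classical in
lemma psi_monomial (ξ : BV s r → K) (σ : BV s r →₀ ℕ) (c : K) :
    psi ξ (monomial σ c) = Polynomial.C (monomial σ c) * Polynomial.X ^ w ξ σ := by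
  rw [monomial_eq, map_mul, Finsupp.prod, map_prod]
  have h1 : psi ξ (C c) = Polynomial.C (C c) := by
    simp [psi, MvPolynomial.algebraMap_eq, Polynomial.algebraMap_apply]
  have h2 : ∀ i ∈ σ.support, psi ξ (X i ^ σ i)
      = Polynomial.X ^ (if ξ i = 0 then σ i else 0) * Polynomial.C (X i ^ σ i) := by
    intro i _
    rw [map_pow]
    simp only [psi, aeval_X]
    split_ifs with h
    · rw [mul_pow, ← Polynomial.C_pow]
    · rw [← Polynomial.C_pow, pow_zero, one_mul]
  rw [Finset.prod_congr rfl h2, Finset.prod_mul_distrib, Finset.prod_pow_eq_pow_sum, h1,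
    map_mul Polynomial.C (C c),
    map_prod (Polynomial.C : BR K s r →+* Polynomial (BR K s r)) (fun x => X x ^ σ x) σ.support]
  unfold w
  ring

lemma coeff_psi (ξ : BV s r → K) (g : BR K s r) (σ : BV s r →₀ ℕ) :
    MvPolynomial.coeff σ (Polynomial.coeff (psi ξ g) (w ξ σ)) = MvPolynomial.coeff σ g := by
  induction g using MvPolynomial.induction_on' with
  | monomial τ c =>
    rw [psi_monomial, Polynomial.coeff_C_mul, Polynomial.coeff_X_pow]
    by_cases hτσ : τ = σ
    · subst hτσ; simp
    · rw [MvPolynomial.coeff_monomial, if_neg hτσ]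
      split_ifs with h
      · rw [mul_one, MvPolynomial.coeff_monomial, if_neg hτσ]
      · simp
  | add p q hp hq =>
    rw [map_add, Polynomial.coeff_add, MvPolynomial.coeff_add, MvPolynomial.coeff_add, hp, hq]

lemma prod_mem_pow {R ι : Type*} [CommRing R] (I : Ideal R) (sf : Finset ι) (p : ι → R)
    (e : ι → ℕ) (h : ∀ i ∈ sf, p i ∈ I ^ e i) :
    (∏ i ∈ sf, p i) ∈ I ^ (∑ i ∈ sf, e i) := by
  classical
  induction sf using Finset.induction with
  | empty => simp [Ideal.one_eq_top]
  | insert a sfin hni ih =>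
    rw [Finset.prod_insert hni, Finset.sum_insert hni, pow_add]
    exact Ideal.mul_mem_mul (h _ (Finset.mem_insert_self _ _))
      (ih fun i hi => h i (Finset.mem_insert_of_mem hi))

open Classical in
lemma monomial_mem (ξ : BV s r → K) (σ : BV s r →₀ ℕ) (c : K) {m : ℕ} (hm : m ≤ w ξ σ) :
    monomial σ c ∈ Ivan K s r ξ ^ m := by
  refine Ideal.pow_le_pow_right hm ?_
  rw [monomial_eq, Finsupp.prod]
  refine Ideal.mul_mem_left _ _ ?_
  refine prod_mem_pow _ _ _ (fun i => if ξ i = 0 then σ i else 0) ?_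
  intro i _
  split_ifs with h
  · refine Ideal.pow_mem_pow ?_ _
    unfold Ivan
    exact Ideal.subset_span ⟨i, h, rfl⟩
  · simp [Ideal.one_eq_top]

lemma mem_pow_iff (ξ : BV s r → K) (g : BR K s r) (m : ℕ) :
    g ∈ Ivan K s r ξ ^ m ↔ Polynomial.X ^ m ∣ psi ξ g := by
  constructor
  · intro hg
    have key : ∀ n : ℕ, Ivan K s r ξ ^ n ≤
        (Ideal.span {(Polynomial.X : Polynomial (BR K s r)) ^ n}).comap (psi ξ) := by
      intro n
      induction n with
      | zero => simp [Ideal.span_singleton_one]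
      | succ n ih =>
        rw [pow_succ, pow_succ]
        refine Ideal.mul_le.2 fun a ha b hb => ?_
        have hIle : Ivan K s r ξ ≤ (Ideal.span {(Polynomial.X : Polynomial (BR K s r))}).comap (psi ξ) := by
          rw [Ivan, Ideal.span_le]
          rintro p ⟨i, hi, rfl⟩
          simp only [Set.mem_setOf_eq, SetLike.mem_coe, Ideal.mem_comap,
            Ideal.mem_span_singleton, psi, aeval_X, if_pos hi]
          exact Dvd.intro _ rfl
        have hb' : Polynomial.X ∣ psi ξ b := by
          have := hIle hb
          rwa [Ideal.mem_comap, Ideal.mem_span_singleton] at this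
        have ha' := ih ha
        rw [Ideal.mem_comap, Ideal.mem_span_singleton] at ha' ⊢
        rw [map_mul]
        exact mul_dvd_mul ha' hb'
    have := key m hg
    rwa [Ideal.mem_comap, Ideal.mem_span_singleton] at this
  · intro hdvd
    rw [Polynomial.X_pow_dvd_iff] at hdvd
    have hco : ∀ σ : BV s r →₀ ℕ, w ξ σ < m → MvPolynomial.coeff σ g = 0 := by
      intro σ hσ
      rw [← coeff_psi ξ g σ, hdvd _ hσ]
      simp
    rw [as_sum g]
    refine Ideal.sum_mem _ fun σ hσ => ?_
    refine monomial_mem ξ σ _ ?_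
    by_contra hlt
    exact (mem_support_iff.1 hσ) (hco σ (lt_of_not_ge hlt))

lemma eval_constCoeff (ξ : BV s r → K) (u : BR K s r) :
    eval ξ (Polynomial.coeff (psi ξ u) 0) = eval ξ u := by
  induction u using MvPolynomial.induction_on with
  | C c => simp [psi, MvPolynomial.algebraMap_eq, Polynomial.algebraMap_apply]
  | add p q hp hq => rw [map_add, Polynomial.coeff_add, map_add, map_add, hp, hq]
  | mul_X p i hp =>
    rw [map_mul, Polynomial.mul_coeff_zero, map_mul, hp, map_mul, eval_X]
    congr 1
    simp only [psi, aeval_X]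
    split_ifs with h
    · simp [h]
    · simp

lemma saturation (ξ : BV s r → K) {u g : BR K s r} {m : ℕ} (hu : eval ξ u ≠ 0)
    (h : u * g ∈ Ivan K s r ξ ^ m) : g ∈ Ivan K s r ξ ^ m := by
  rw [mem_pow_iff] at h ⊢
  have hX : ¬ (Polynomial.X ∣ psi ξ u) := by
    rw [Polynomial.X_dvd_iff]
    intro h0
    exact hu (by rw [← eval_constCoeff ξ u, h0, map_zero])
  rw [map_mul] at h
  exact (Polynomial.prime_X).pow_dvd_of_dvd_mul_left m hX h


lemma map_le_iff (ξ : BV s r → K) (J : Ideal (BR K s r)) (m : ℕ) :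
    J.map (algebraMap (BR K s r) (Oloc K s r ξ)) ≤
      ((Ivan K s r ξ).map (algebraMap (BR K s r) (Oloc K s r ξ))) ^ m ↔ J ≤ Ivan K s r ξ ^ m := by
  rw [← Ideal.map_pow]
  constructor
  · intro h g hg
    have hmem := h (Ideal.mem_map_of_mem _ hg)
    rw [IsLocalization.mem_map_algebraMap_iff (mAt K s r ξ).primeCompl (Oloc K s r ξ)] at hmem
    obtain ⟨⟨av, u⟩, hau⟩ := hmem
    have hinj : Function.Injective (algebraMap (BR K s r) (Oloc K s r ξ)) := by
      apply IsLocalization.injective (M := (mAt K s r ξ).primeCompl)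
      intro x hx
      refine mem_nonZeroDivisors_of_ne_zero ?_
      rintro rfl
      exact hx (Ideal.zero_mem _)
    have hga : g * (u : BR K s r) = av := hinj (by rw [map_mul]; exact hau)
    have hu : eval ξ (u : BR K s r) ≠ 0 := by
      have hu' : (u : BR K s r) ∉ RingHom.ker (eval ξ) := u.2
      intro h0
      exact hu' (RingHom.mem_ker.2 h0)
    refine saturation ξ hu ?_
    rw [mul_comm, hga]
    exact av.2
  · intro h
    exact Ideal.map_mono h

end EAux
end

/-- the `E`-order function of a binomial ideal is equivariant for the torus
action `(t·ξ)_i = t^{a_i}·ξ_i`: for `t ≠ 0` and `ξ ∈ W`, the point `t·ξ` lies in `W` and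
`Eord_ξ(J) = Eord_{t·ξ}(J)`. -/
theorem Eord_torus_equivariant
    (K : Type) [Field K] [IsAlgClosed K] (s r : ℕ)
    (J : Ideal (BR K s r)) (hJ : IsBinomialIdeal K s r J)
    (a : BV s r → ℤ) (t : K) (ht : t ≠ 0)
    (ξ : BV s r → K) (hξ : ξ ∈ Wset K s r) :
    (fun i => t ^ a i * ξ i) ∈ Wset K s r ∧
      Eord K s r ξ J = Eord K s r (fun i => t ^ a i * ξ i) J := by
  have hzero : ∀ i, (t ^ a i * ξ i = 0) ↔ ξ i = 0 := by
    intro i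
    constructor
    · intro h
      rcases mul_eq_zero.1 h with h | h
      · exact absurd h (zpow_ne_zero _ ht)
      · exact h
    · intro h; rw [h, mul_zero]
  constructor
  · intro j
    exact fun h => hξ j ((hzero _).1 h)
  · have hIv : Ivan K s r (fun i => t ^ a i * ξ i) = Ivan K s r ξ := by
      unfold Ivan
      congr 1
      ext p
      constructor
      · rintro ⟨i, h0, rfl⟩; exact ⟨i, (hzero i).1 h0, rfl⟩
      · rintro ⟨i, h0, rfl⟩; exact ⟨i, (hzero i).2 h0, rfl⟩
    have hset : {m : ℕ | J.map (algebraMap (BR K s r) (Oloc K s r ξ)) ≤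
          ((Ivan K s r ξ).map (algebraMap (BR K s r) (Oloc K s r ξ))) ^ m}
        = {m : ℕ | J.map (algebraMap (BR K s r) (Oloc K s r (fun i => t ^ a i * ξ i))) ≤
          ((Ivan K s r (fun i => t ^ a i * ξ i)).map
            (algebraMap (BR K s r) (Oloc K s r (fun i => t ^ a i * ξ i)))) ^ m} := by
      ext m
      simp only [Set.mem_setOf_eq]
      rw [EAux.map_le_iff, EAux.map_le_iff, hIv]
    unfold Eord
    rw [hset]
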